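/- Let s > 1/2. There exists a constant C_s such that for all ε₁, ε₂ ∈ [0, 1), all a, b ∈ ℝ, all p ∈ ℝ³, and all unit vectors v, w ∈ S² with v ≠ ±w, ∫_{ℝ³} 1_{[0,ε₁]}(x·v − a) · 1_{[0,ε₂]}(x·w − b) · ⟨x + p⟩^{−2s} dx ≤ C_s ( ε₁ ε₂ / |v − w| + ε₁ ε₂ / |v + w| ), where 1_{[0,ε]} denotes the indicator function of the interval [0, ε]. -/

import Mathlib

open MeasureTheory Matrix

section helpers

lemma det_toEuclideanLin' (M : Matrix (Fin 3) (Fin 3) ℝ) :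
    LinearMap.det (Matrix.toEuclideanLin M) = M.det := by
  have h : Matrix.toEuclideanLin M =
      (((WithLp.linearEquiv 2 ℝ (Fin 3 → ℝ)).symm : (Fin 3 → ℝ) →ₗ[ℝ] EuclideanSpace ℝ (Fin 3))
        ∘ₗ (Matrix.toLin' M) ∘ₗ
        (((WithLp.linearEquiv 2 ℝ (Fin 3 → ℝ)).symm.symm :
          EuclideanSpace ℝ (Fin 3) →ₗ[ℝ] (Fin 3 → ℝ)))) := rfl
  rw [h, LinearMap.det_conj, LinearMap.det_toLin']

lemma gram_det (v w e : EuclideanSpace ℝ (Fin 3)) (hv : ‖v‖ = 1) (hw : ‖w‖ = 1)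
    (he : ‖e‖ = 1) (hve : (inner ℝ v e : ℝ) = 0) (hwe : (inner ℝ w e : ℝ) = 0) :
    (Matrix.of (fun i j => (![v, w, e] : Fin 3 → EuclideanSpace ℝ (Fin 3)) i j)).det ^ 2
      = 1 - (inner ℝ v w : ℝ) ^ 2 := by
  set u : Fin 3 → EuclideanSpace ℝ (Fin 3) := ![v, w, e] with hu
  set M : Matrix (Fin 3) (Fin 3) ℝ := Matrix.of (fun i j => u i j) with hM
  have hvv : (inner ℝ v v : ℝ) = 1 := by rw [real_inner_self_eq_norm_sq, hv]; norm_num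
  have hww : (inner ℝ w w : ℝ) = 1 := by rw [real_inner_self_eq_norm_sq, hw]; norm_num
  have hee : (inner ℝ e e : ℝ) = 1 := by rw [real_inner_self_eq_norm_sq, he]; norm_num
  have hev : (inner ℝ e v : ℝ) = 0 := by rw [real_inner_comm]; exact hve
  have hew : (inner ℝ e w : ℝ) = 0 := by rw [real_inner_comm]; exact hwe
  have key : ∀ i k, (M * Mᵀ) i k = (inner ℝ (u i) (u k) : ℝ) := by
    intro i k
    rw [Matrix.mul_apply, PiLp.inner_apply]
    apply Finset.sum_congr rfl
    intro j _
    simp only [hM, Matrix.transpose_apply, Matrix.of_apply, RCLike.inner_apply,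
      conj_trivial]
    ring
  have hMM : M * Mᵀ = !![1, (inner ℝ v w : ℝ), 0; (inner ℝ v w : ℝ), 1, 0; 0, 0, 1] := by
    funext i k
    rw [key]
    fin_cases i <;> fin_cases k <;>
      simp [hu, hv, hw, he, hvv, hww, hee, hve, hwe, hev, hew, real_inner_comm w v, -PiLp.inner_apply]
  have h1 : M.det ^ 2 = (M * Mᵀ).det := by
    rw [Matrix.det_mul, Matrix.det_transpose, sq]
  rw [h1, hMM]
  rw [Matrix.det_fin_three]
  simp
  ring

lemma exists_unit_orthogonal (v w : EuclideanSpace ℝ (Fin 3)) :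
    ∃ e : EuclideanSpace ℝ (Fin 3), ‖e‖ = 1 ∧ (inner ℝ v e : ℝ) = 0 ∧ (inner ℝ w e : ℝ) = 0 := by
  classical
  set S := Submodule.span ℝ ({v, w} : Set (EuclideanSpace ℝ (Fin 3))) with hS
  have hKne : Sᗮ ≠ ⊥ := by
    intro h
    have htop : S = ⊤ := Submodule.orthogonal_eq_bot_iff.mp h
    have h2 : Module.finrank ℝ S ≤ 2 := by
      refine le_trans (finrank_span_le_card _) ?_
      have : ({v, w} : Set (EuclideanSpace ℝ (Fin 3))).toFinset ⊆ {v, w} := by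
        intro x hx
        simpa using hx
      calc ({v, w} : Set (EuclideanSpace ℝ (Fin 3))).toFinset.card
          ≤ ({v, w} : Finset (EuclideanSpace ℝ (Fin 3))).card := Finset.card_le_card this
        _ ≤ 2 := Finset.card_insert_le _ _ |>.trans (by simp)
    rw [htop] at h2
    have h3 : Module.finrank ℝ (⊤ : Submodule ℝ (EuclideanSpace ℝ (Fin 3))) = 3 := by
      rw [finrank_top]; exact finrank_euclideanSpace_fin
    omega
  obtain ⟨x, hxK, hx0⟩ := Submodule.ne_bot_iff _ |>.mp hKne
  refine ⟨(‖x‖ : ℝ)⁻¹ • x, ?_, ?_, ?_⟩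
  · rw [norm_smul]
    simp [norm_ne_zero_iff.mpr hx0]
  · rw [real_inner_smul_right]
    have := (Submodule.mem_orthogonal S x).mp hxK v (Submodule.subset_span (by simp))
    simp [this]
  · rw [real_inner_smul_right]
    have := (Submodule.mem_orthogonal S x).mp hxK w (Submodule.subset_span (by simp))
    simp [this]

lemma box_volume (l r : Fin 3 → ℝ) :
    volume {y : EuclideanSpace ℝ (Fin 3) | ∀ i, y i ∈ Set.Icc (l i) (r i)}
      = ENNReal.ofReal (r 0 - l 0) * ENNReal.ofReal (r 1 - l 1) * ENNReal.ofReal (r 2 - l 2) := by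
  have hset : {y : EuclideanSpace ℝ (Fin 3) | ∀ i, y i ∈ Set.Icc (l i) (r i)}
      = (MeasurableEquiv.toLp 2 (Fin 3 → ℝ)).symm ⁻¹' (Set.univ.pi fun i => Set.Icc (l i) (r i)) := by
    ext x
    simp only [Set.mem_setOf_eq, Set.mem_preimage, Set.mem_univ_pi]
    rfl
  rw [hset, (EuclideanSpace.volume_preserving_symm_measurableEquiv_toLp (ι := Fin 3)).measure_preimage
    ((MeasurableSet.univ_pi fun i => measurableSet_Icc).nullMeasurableSet)]
  rw [volume_pi_pi]
  simp [Real.volume_Icc, Fin.prod_univ_three]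

lemma slab_volume (v w e : EuclideanSpace ℝ (Fin 3))
    (hdet : (Matrix.of (fun i j => (![v, w, e] : Fin 3 → EuclideanSpace ℝ (Fin 3)) i j)).det ≠ 0)
    (l r : Fin 3 → ℝ) :
    volume {x : EuclideanSpace ℝ (Fin 3) |
        (inner ℝ x v : ℝ) ∈ Set.Icc (l 0) (r 0) ∧ (inner ℝ x w : ℝ) ∈ Set.Icc (l 1) (r 1) ∧
        (inner ℝ x e : ℝ) ∈ Set.Icc (l 2) (r 2)}
      = ENNReal.ofReal
          |(Matrix.of (fun i j => (![v, w, e] : Fin 3 → EuclideanSpace ℝ (Fin 3)) i j)).det|⁻¹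
        * (ENNReal.ofReal (r 0 - l 0) * ENNReal.ofReal (r 1 - l 1) * ENNReal.ofReal (r 2 - l 2)) := by
  set M := Matrix.of (fun i j => (![v, w, e] : Fin 3 → EuclideanSpace ℝ (Fin 3)) i j) with hM
  set T := Matrix.toEuclideanLin M with hT
  have hTapp : ∀ (x : EuclideanSpace ℝ (Fin 3)) (i : Fin 3),
      T x i = (inner ℝ x ((![v, w, e] : Fin 3 → EuclideanSpace ℝ (Fin 3)) i) : ℝ) := by
    intro x i
    have : T x i = ∑ j : Fin 3, M i j * x j := rfl
    rw [this, PiLp.inner_apply]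
    apply Finset.sum_congr rfl
    intro j _
    simp [hM, mul_comm]
  have hpre : {x : EuclideanSpace ℝ (Fin 3) |
        (inner ℝ x v : ℝ) ∈ Set.Icc (l 0) (r 0) ∧ (inner ℝ x w : ℝ) ∈ Set.Icc (l 1) (r 1) ∧
        (inner ℝ x e : ℝ) ∈ Set.Icc (l 2) (r 2)}
      = (T : EuclideanSpace ℝ (Fin 3) →ₗ[ℝ] EuclideanSpace ℝ (Fin 3)) ⁻¹'
          {y : EuclideanSpace ℝ (Fin 3) | ∀ i, y i ∈ Set.Icc (l i) (r i)} := by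
    ext x
    simp only [Set.mem_setOf_eq, Set.mem_preimage]
    constructor
    · rintro ⟨h0, h1, h2⟩ i
      fin_cases i <;> rw [hTapp] <;> simpa
    · intro h
      refine ⟨?_, ?_, ?_⟩
      · have := h 0; rwa [hTapp] at this
      · have := h 1; rwa [hTapp] at this
      · have := h 2; rwa [hTapp] at this
  have hdetT : LinearMap.det (T : EuclideanSpace ℝ (Fin 3) →ₗ[ℝ] EuclideanSpace ℝ (Fin 3)) ≠ 0 := by
    rw [hT, det_toEuclideanLin']; exact hdet
  rw [hpre, MeasureTheory.Measure.addHaar_preimage_linearMap volume hdetT, box_volume]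
  rw [hT, det_toEuclideanLin', abs_inv]

lemma rho_lintegral (s : ℝ) (hs : 1/2 < s) :
    ∫⁻ t in Set.Ioi (0:ℝ), ENNReal.ofReal (2 * Real.sqrt (max 0 (t ^ (-s⁻¹) - 1)))
      ≤ ENNReal.ofReal (2 * (2*s/(2*s-1))) := by
  have hs0 : (0:ℝ) < s := lt_trans (by norm_num) hs
  set p : ℝ := -(2*s)⁻¹ with hp
  have hp0 : -1 < p := by
    rw [hp, neg_lt, neg_neg]
    rw [inv_lt_one_iff₀]
    right; linarith
  have hpneg : p < 0 := by
    rw [hp, neg_lt_zero]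
    positivity
  have hp1 : 0 < p + 1 := by linarith
  have step1 : ∫⁻ t in Set.Ioi (0:ℝ), ENNReal.ofReal (2 * Real.sqrt (max 0 (t ^ (-s⁻¹) - 1)))
      ≤ ∫⁻ t in Set.Ioi (0:ℝ),
          (Set.Ioo (0:ℝ) 1).indicator (fun t => ENNReal.ofReal (2 * t ^ p)) t := by
    apply lintegral_mono_ae
    filter_upwards [ae_restrict_mem measurableSet_Ioi] with t ht
    simp only [Set.mem_Ioi] at ht
    rcases le_or_gt 1 t with h1 | h1
    · have : t ^ (-s⁻¹) ≤ 1 :=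
        Real.rpow_le_one_of_one_le_of_nonpos h1 (by positivity |> neg_nonpos_of_nonneg)
      have hmax : max 0 (t ^ (-s⁻¹) - 1) = 0 := max_eq_left (by linarith)
      simp [hmax]
    · rw [Set.indicator_of_mem (by exact ⟨ht, h1⟩)]
      apply ENNReal.ofReal_le_ofReal
      have h2 : max 0 (t ^ (-s⁻¹) - 1) ≤ t ^ (-s⁻¹) := by
        apply max_le (Real.rpow_nonneg ht.le _)
        linarith
      have h3 : Real.sqrt (t ^ (-s⁻¹)) = t ^ p := by
        rw [Real.sqrt_eq_rpow, ← Real.rpow_mul ht.le]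
        congr 1
        rw [hp, mul_inv]
        ring
      calc 2 * Real.sqrt (max 0 (t ^ (-s⁻¹) - 1))
          ≤ 2 * Real.sqrt (t ^ (-s⁻¹)) := by
            have := Real.sqrt_le_sqrt h2
            linarith
        _ = 2 * t ^ p := by rw [h3]
  refine le_trans step1 ?_
  rw [lintegral_indicator measurableSet_Ioo, Measure.restrict_restrict measurableSet_Ioo]
  have hinter : Set.Ioo (0:ℝ) 1 ∩ Set.Ioi 0 = Set.Ioo 0 1 := by
    ext t; simp; intro h _; exact h
  rw [hinter]
  have hint : IntegrableOn (fun t : ℝ => 2 * t ^ p) (Set.Ioo 0 1) := by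
    have h1 : IntervalIntegrable (fun t : ℝ => t ^ p) volume 0 1 :=
      intervalIntegral.intervalIntegrable_rpow' hp0
    have h2 : IntegrableOn (fun t : ℝ => t ^ p) (Set.Ioc 0 1) := by
      rwa [intervalIntegrable_iff_integrableOn_Ioc_of_le zero_le_one] at h1
    exact (h2.mono_set Set.Ioo_subset_Ioc_self).const_mul 2
  rw [← MeasureTheory.ofReal_integral_eq_lintegral_ofReal hint]
  · apply ENNReal.ofReal_le_ofReal
    have hval : ∫ t in Set.Ioo (0:ℝ) 1, 2 * t ^ p = 2 * (1/(p+1)) := by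
      rw [← MeasureTheory.integral_Ioc_eq_integral_Ioo,
        ← intervalIntegral.integral_of_le zero_le_one]
      rw [intervalIntegral.integral_const_mul, integral_rpow (Or.inl hp0)]
      rw [Real.one_rpow, Real.zero_rpow (ne_of_gt hp1)]
      ring
    rw [hval]
    have : 1/(p+1) = 2*s/(2*s-1) := by
      rw [hp]
      field_simp
      ring
    rw [this]
  · filter_upwards [ae_restrict_mem measurableSet_Ioo] with t ht
    have : (0:ℝ) < t := ht.1
    positivity

end helpers

set_option maxHeartbeats 1000000 in
/-- Let `s > 1/2`. There exists a constant `C_s` such that for all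
`ε₁, ε₂ ∈ [0,1)`, all `a, b ∈ ℝ`, all `p ∈ ℝ³`, and all unit vectors `v, w ∈ S²` with
`v ≠ ±w`, `∫_{ℝ³} 1_{[0,ε₁]}(x·v - a) 1_{[0,ε₂]}(x·w - b) ⟨x+p⟩^{-2s} dx ≤
C_s (ε₁ε₂/|v-w| + ε₁ε₂/|v+w|)`, where `⟨x⟩ = (1 + |x|²)^{1/2}`. -/
theorem stmt_12 (s : ℝ) (hs : 1 / 2 < s) :
    ∃ C : ℝ, ∀ (ε₁ ε₂ : ℝ), 0 ≤ ε₁ → ε₁ < 1 → 0 ≤ ε₂ → ε₂ < 1 →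
      ∀ (a b : ℝ) (p v w : EuclideanSpace ℝ (Fin 3)),
        ‖v‖ = 1 → ‖w‖ = 1 → v ≠ w → v ≠ -w →
        (∫⁻ x : EuclideanSpace ℝ (Fin 3),
            ENNReal.ofReal ((Set.Icc 0 ε₁).indicator (fun _ => (1 : ℝ)) ((inner ℝ x v : ℝ) - a) *
              (Set.Icc 0 ε₂).indicator (fun _ => (1 : ℝ)) ((inner ℝ x w : ℝ) - b) *
              (1 + ‖x + p‖ ^ 2) ^ (-s)))
          ≤ ENNReal.ofReal (C * (ε₁ * ε₂ / ‖v - w‖ + ε₁ * ε₂ / ‖v + w‖)) := by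
  have rho_lintegral := rho_lintegral s hs

  have hs0 : (0:ℝ) < s := lt_trans (by norm_num) hs
  set K : ℝ := 2*s/(2*s-1) with hK
  have hK0 : 0 < K := by
    apply div_pos <;> linarith
  refine ⟨4 * K, ?_⟩
  intro ε₁ ε₂ hε₁ hε₁' hε₂ hε₂' a b p v w hv hw hvw hvw'
  obtain ⟨e, he1, hve, hwe⟩ := exists_unit_orthogonal v w
  set c : ℝ := (inner ℝ v w : ℝ) with hc
  have hc1 : c < 1 := (inner_lt_one_iff_real_of_norm_eq_one hv hw).mpr hvw
  have hc2 : -1 < c := by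
    have h := (inner_lt_one_iff_real_of_norm_eq_one hv (by rw [norm_neg]; exact hw)).mpr hvw'
    rw [inner_neg_right] at h
    linarith
  set M := Matrix.of (fun i j => (![v, w, e] : Fin 3 → EuclideanSpace ℝ (Fin 3)) i j) with hM
  have hdet2 : M.det ^ 2 = 1 - c ^ 2 := gram_det v w e hv hw he1 hve hwe
  have hc2pos : 0 < 1 - c ^ 2 := by nlinarith
  have hMdet : M.det ≠ 0 := by
    intro h
    rw [h] at hdet2
    simp at hdet2
    nlinarith
  have hA : (0:ℝ) < ‖v - w‖ := by
    rw [norm_pos_iff, sub_ne_zero]; exact hvw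
  have hB : (0:ℝ) < ‖v + w‖ := by
    rw [norm_pos_iff]
    intro h
    exact hvw' (by rw [← sub_eq_zero]; simpa [sub_neg_eq_add] using h)
  have hA2 : ‖v - w‖ ^ 2 = 2 - 2 * c := by
    rw [norm_sub_sq_real, hv, hw]; rw [hc]; ring
  have hB2 : ‖v + w‖ ^ 2 = 2 + 2 * c := by
    rw [norm_add_sq_real, hv, hw]; rw [hc]; ring
  have habs : |M.det| = ‖v - w‖ * ‖v + w‖ / 2 := by
    rw [← Real.sqrt_sq_eq_abs, hdet2]
    rw [show (1 - c ^ 2) = (‖v - w‖ * ‖v + w‖ / 2) ^ 2 by nlinarith]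
    exact Real.sqrt_sq (by positivity)
  -- the integrand
  set f : EuclideanSpace ℝ (Fin 3) → ℝ := fun x =>
    (Set.Icc 0 ε₁).indicator (fun _ => (1 : ℝ)) ((inner ℝ x v : ℝ) - a) *
      (Set.Icc 0 ε₂).indicator (fun _ => (1 : ℝ)) ((inner ℝ x w : ℝ) - b) *
      (1 + ‖x + p‖ ^ 2) ^ (-s) with hf
  have hind_nonneg : ∀ (ε y : ℝ), 0 ≤ (Set.Icc 0 ε).indicator (fun _ => (1 : ℝ)) y :=
    fun ε y => Set.indicator_nonneg (fun _ _ => zero_le_one) y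
  have hind_le_one : ∀ (ε y : ℝ), (Set.Icc 0 ε).indicator (fun _ => (1 : ℝ)) y ≤ 1 := by
    intro ε y
    by_cases h : y ∈ Set.Icc (0:ℝ) ε
    · rw [Set.indicator_of_mem h]
    · rw [Set.indicator_of_notMem h]; norm_num
  have hf_nn : ∀ x, 0 ≤ f x := by
    intro x
    apply mul_nonneg (mul_nonneg (hind_nonneg _ _) (hind_nonneg _ _))
    apply Real.rpow_nonneg
    positivity
  have hf_mble : Measurable f := by
    have hm1 : Measurable fun x : EuclideanSpace ℝ (Fin 3) =>
        (Set.Icc 0 ε₁).indicator (fun _ => (1 : ℝ)) ((inner ℝ x v : ℝ) - a) := by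
      have hg : Continuous fun x : EuclideanSpace ℝ (Fin 3) => (inner ℝ x v : ℝ) - a :=
        (continuous_id.inner continuous_const).sub continuous_const
      exact (measurable_const.indicator measurableSet_Icc).comp hg.measurable
    have hm2 : Measurable fun x : EuclideanSpace ℝ (Fin 3) =>
        (Set.Icc 0 ε₂).indicator (fun _ => (1 : ℝ)) ((inner ℝ x w : ℝ) - b) := by
      have hg : Continuous fun x : EuclideanSpace ℝ (Fin 3) => (inner ℝ x w : ℝ) - b :=
        (continuous_id.inner continuous_const).sub continuous_const
      exact (measurable_const.indicator measurableSet_Icc).comp hg.measurable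
    have hW : Continuous fun x : EuclideanSpace ℝ (Fin 3) => (1 + ‖x + p‖ ^ 2) ^ (-s) := by
      have h1 : Continuous fun x : EuclideanSpace ℝ (Fin 3) => 1 + ‖x + p‖ ^ 2 :=
        continuous_const.add (((continuous_id.add continuous_const).norm).pow 2)
      exact h1.rpow_const (fun x => Or.inl (by positivity))
    exact (hm1.mul hm2).mul hW.measurable
  rw [show (∫⁻ x : EuclideanSpace ℝ (Fin 3),
      ENNReal.ofReal ((Set.Icc 0 ε₁).indicator (fun _ => (1 : ℝ)) ((inner ℝ x v : ℝ) - a) *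
        (Set.Icc 0 ε₂).indicator (fun _ => (1 : ℝ)) ((inner ℝ x w : ℝ) - b) *
        (1 + ‖x + p‖ ^ 2) ^ (-s))) = ∫⁻ x, ENNReal.ofReal (f x) from rfl]
  rw [lintegral_eq_lintegral_meas_lt volume (Filter.Eventually.of_forall hf_nn)
    hf_mble.aemeasurable]
  -- ρ and the pointwise slab bound
  set ρ : ℝ → ℝ := fun t => Real.sqrt (max 0 (t ^ (-s⁻¹) - 1)) with hρ
  have hρ_nonneg : ∀ t, 0 ≤ ρ t := fun t => Real.sqrt_nonneg _
  set c₃ : ℝ := (inner ℝ p e : ℝ) with hc₃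
  have step1 : ∫⁻ t in Set.Ioi (0:ℝ), volume {x | t < f x}
      ≤ ∫⁻ t in Set.Ioi (0:ℝ),
          (ENNReal.ofReal |M.det|⁻¹ * (ENNReal.ofReal ε₁ * ENNReal.ofReal ε₂))
            * ENNReal.ofReal (2 * ρ t) := by
    apply lintegral_mono_ae
    filter_upwards [ae_restrict_mem measurableSet_Ioi] with t ht
    simp only [Set.mem_Ioi] at ht
    have hsub : {x | t < f x} ⊆ {x : EuclideanSpace ℝ (Fin 3) |
        (inner ℝ x v : ℝ) ∈ Set.Icc ((![a, b, -c₃ - ρ t] : Fin 3 → ℝ) 0)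
          ((![a + ε₁, b + ε₂, -c₃ + ρ t] : Fin 3 → ℝ) 0) ∧
        (inner ℝ x w : ℝ) ∈ Set.Icc ((![a, b, -c₃ - ρ t] : Fin 3 → ℝ) 1)
          ((![a + ε₁, b + ε₂, -c₃ + ρ t] : Fin 3 → ℝ) 1) ∧
        (inner ℝ x e : ℝ) ∈ Set.Icc ((![a, b, -c₃ - ρ t] : Fin 3 → ℝ) 2)
          ((![a + ε₁, b + ε₂, -c₃ + ρ t] : Fin 3 → ℝ) 2)} := by
      intro x hx
      simp only [Set.mem_setOf_eq] at hx ⊢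
      have hI1 : (inner ℝ x v : ℝ) - a ∈ Set.Icc 0 ε₁ := by
        by_contra h
        rw [hf] at hx
        simp only [Set.indicator_of_notMem h, zero_mul] at hx
        linarith
      have hI2 : (inner ℝ x w : ℝ) - b ∈ Set.Icc 0 ε₂ := by
        by_contra h
        rw [hf] at hx
        simp only [Set.indicator_of_notMem h, mul_zero, zero_mul] at hx
        linarith
      have hWbig : t < (1 + ‖x + p‖ ^ 2) ^ (-s) := by
        have hW_nonneg : (0:ℝ) ≤ (1 + ‖x + p‖ ^ 2) ^ (-s) := Real.rpow_nonneg (by positivity) _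
        have : f x ≤ (1 + ‖x + p‖ ^ 2) ^ (-s) := by
          rw [hf]
          calc (Set.Icc 0 ε₁).indicator (fun _ => (1 : ℝ)) ((inner ℝ x v : ℝ) - a) *
              (Set.Icc 0 ε₂).indicator (fun _ => (1 : ℝ)) ((inner ℝ x w : ℝ) - b) *
              (1 + ‖x + p‖ ^ 2) ^ (-s)
              ≤ 1 * 1 * (1 + ‖x + p‖ ^ 2) ^ (-s) := by
                apply mul_le_mul_of_nonneg_right _ hW_nonneg
                apply mul_le_mul (hind_le_one _ _) (hind_le_one _ _) (hind_nonneg _ _)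
                norm_num
            _ = (1 + ‖x + p‖ ^ 2) ^ (-s) := by ring
        linarith
      -- derive the third coordinate bound
      have hA0 : (0:ℝ) < 1 + ‖x + p‖ ^ 2 := by positivity
      have hkey : 1 + ‖x + p‖ ^ 2 < t ^ (-s⁻¹) := by
        have h1 : ((1 + ‖x + p‖ ^ 2) ^ (-s)) ^ (-s⁻¹) < t ^ (-s⁻¹) :=
          Real.rpow_lt_rpow_of_neg ht hWbig (by rw [neg_lt_zero]; positivity)
        rwa [← Real.rpow_mul hA0.le, show (-s) * (-s⁻¹) = 1 by field_simp, Real.rpow_one] at h1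
      have hsq : ((inner ℝ x e : ℝ) + c₃) ^ 2 ≤ ρ t ^ 2 := by
        have h1 : |(inner ℝ (x + p) e : ℝ)| ≤ ‖x + p‖ := by
          calc |(inner ℝ (x + p) e : ℝ)| ≤ ‖x + p‖ * ‖e‖ := abs_real_inner_le_norm _ _
            _ = ‖x + p‖ := by rw [he1, mul_one]
        have h2 : (inner ℝ (x + p) e : ℝ) = (inner ℝ x e : ℝ) + c₃ := by
          rw [inner_add_left, hc₃]
        have h3 : ρ t ^ 2 = max 0 (t ^ (-s⁻¹) - 1) := Real.sq_sqrt (le_max_left _ _)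
        have h4 : ‖x + p‖ ^ 2 ≤ max 0 (t ^ (-s⁻¹) - 1) :=
          le_max_of_le_right (by linarith)
        calc ((inner ℝ x e : ℝ) + c₃) ^ 2 = (inner ℝ (x + p) e : ℝ) ^ 2 := by rw [h2]
          _ ≤ ‖x + p‖ ^ 2 := by
              rw [← sq_abs]
              exact pow_le_pow_left₀ (abs_nonneg _) h1 2
          _ ≤ ρ t ^ 2 := by rw [h3]; exact h4
      have h5 : |(inner ℝ x e : ℝ) + c₃| ≤ ρ t := by
        rw [← Real.sqrt_sq_eq_abs, ← Real.sqrt_sq (hρ_nonneg t)]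
        exact Real.sqrt_le_sqrt hsq
      rw [abs_le] at h5
      simp only [Set.mem_Icc, Matrix.cons_val_zero, Matrix.cons_val_one, Matrix.head_cons,
        Matrix.cons_val_two, Matrix.tail_cons] at hI1 hI2 ⊢
      exact ⟨⟨by linarith [hI1.1], by linarith [hI1.2]⟩,
        ⟨by linarith [hI2.1], by linarith [hI2.2]⟩,
        ⟨by linarith [h5.1], by linarith [h5.2]⟩⟩
    calc volume {x | t < f x} ≤ _ := measure_mono hsub
      _ ≤ _ := by
        rw [slab_volume v w e hMdet]
        simp only [Matrix.cons_val_zero, Matrix.cons_val_one, Matrix.head_cons,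
          Matrix.cons_val_two, Matrix.tail_cons]
        have e1 : a + ε₁ - a = ε₁ := by ring
        have e2 : b + ε₂ - b = ε₂ := by ring
        have e3 : (-c₃ + ρ t) - (-c₃ - ρ t) = 2 * ρ t := by ring
        rw [e1, e2, e3, ← hM]
        apply le_of_eq
        ring
  refine le_trans step1 ?_
  rw [lintegral_const_mul' _ _ (ENNReal.mul_ne_top ENNReal.ofReal_ne_top
    (ENNReal.mul_ne_top ENNReal.ofReal_ne_top ENNReal.ofReal_ne_top))]
  have step2 : (ENNReal.ofReal |M.det|⁻¹ * (ENNReal.ofReal ε₁ * ENNReal.ofReal ε₂)) *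
      (∫⁻ t in Set.Ioi (0:ℝ), ENNReal.ofReal (2 * ρ t))
      ≤ (ENNReal.ofReal |M.det|⁻¹ * (ENNReal.ofReal ε₁ * ENNReal.ofReal ε₂)) *
        ENNReal.ofReal (2 * (2*s/(2*s-1))) := by
    apply mul_le_mul_right
    exact rho_lintegral
  refine le_trans step2 ?_
  rw [← ENNReal.ofReal_mul (by positivity), ← ENNReal.ofReal_mul (by positivity),
    ← ENNReal.ofReal_mul (by positivity)]
  apply ENNReal.ofReal_le_ofReal
  rw [← hK]
  have hAB2 : ‖v - w‖ ^ 2 + ‖v + w‖ ^ 2 = 4 := by rw [hA2, hB2]; ring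
  have hsum : 1 ≤ ‖v - w‖ + ‖v + w‖ := by nlinarith [mul_pos hA hB]
  set A : ℝ := ‖v - w‖
  set B : ℝ := ‖v + w‖
  have habs' : |M.det|⁻¹ = 2 / (A * B) := by
    rw [habs]
    field_simp
  calc |M.det|⁻¹ * (ε₁ * ε₂) * (2 * K) = 4*K*(ε₁*ε₂) * (1/(A*B)) := by
        rw [habs']; field_simp; ring
    _ ≤ 4*K*(ε₁*ε₂) * ((A+B)/(A*B)) := by
        apply mul_le_mul_of_nonneg_left _ (by positivity)
        apply (div_le_div_iff_of_pos_right (by positivity)).mpr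
        linarith
    _ = 4*K*(ε₁*ε₂/A + ε₁*ε₂/B) := by field_simp; ring
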